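/- Let C be a topological category in which d and r are open maps. Then d and r are local homeomorphisms if and only if the open local bisections form a base for the topology on C. -/

import Mathlib

/-- A small category presented as a set of arrows with domain map `d`,
range map `r`, and a (total) composition `mul a b`, meaningful when `d a = r b`. -/
structure CatStruct (C : Type*) where
  d : C → C
  r : C → C
  mul : C → C → C
  r_d : ∀ a, r (d a) = d a
  d_d : ∀ a, d (d a) = d a
  r_r : ∀ a, r (r a) = r a
  d_r : ∀ a, d (r a) = r a
  d_mul : ∀ a b, d a = r b → d (mul a b) = d b
  r_mul : ∀ a b, d a = r b → r (mul a b) = r a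
  mul_assoc : ∀ a b c, d a = r b → d b = r c → mul (mul a b) c = mul a (mul b c)
  mul_d : ∀ a, mul a (d a) = a
  r_mul_self : ∀ a, mul (r a) a = a

namespace CatStruct

variable {C : Type*}

/-- `a` is an identity arrow. -/
def IsId (K : CatStruct C) (a : C) : Prop := K.d a = a

/-- The product of two subsets of arrows. -/
def setMul (K : CatStruct C) (A B : Set C) : Set C :=
  {c | ∃ a ∈ A, ∃ b ∈ B, K.d a = K.r b ∧ c = K.mul a b}

/-- A local bisection: `d` and `r` are injective on it. -/
def IsLocalBisection (K : CatStruct C) (A : Set C) : Prop :=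
  Set.InjOn K.d A ∧ Set.InjOn K.r A

end CatStruct

lemma aux_localHomeo {X Y : Type*} [TopologicalSpace X] [TopologicalSpace Y] {f : X → Y}
    (hc : Continuous f) (ho : IsOpenMap f)
    (h : ∀ x : X, ∃ A : Set X, IsOpen A ∧ x ∈ A ∧ Set.InjOn f A) : IsLocalHomeomorph f := by
  intro x
  obtain ⟨A, hA, hxA, hinj⟩ := h x
  haveI : Nonempty X := ⟨x⟩
  exact ⟨OpenPartialHomeomorph.ofContinuousOpen (hinj.toPartialEquiv f A)
    hc.continuousOn ho hA, hxA, rfl⟩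

/-- in a topological category with `d` and `r` open maps,
`d` and `r` are local homeomorphisms iff the open local bisections form a base. -/
theorem etale_iff_open_local_bisections_basis {C : Type*} [TopologicalSpace C]
    (K : CatStruct C)
    (hd : Continuous K.d) (hr : Continuous K.r)
    (hm : Continuous fun p : {p : C × C // K.d p.1 = K.r p.2} => K.mul p.1.1 p.1.2)
    (hdo : IsOpenMap K.d) (hro : IsOpenMap K.r) :
    (IsLocalHomeomorph K.d ∧ IsLocalHomeomorph K.r) ↔
      TopologicalSpace.IsTopologicalBasis
        {A : Set C | IsOpen A ∧ K.IsLocalBisection A} := by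
  constructor
  · rintro ⟨hld, hlr⟩
    refine TopologicalSpace.isTopologicalBasis_of_isOpen_of_nhds (fun u hu => hu.1) ?_
    intro a u hau hu
    obtain ⟨ed, haed, hed⟩ := hld a
    obtain ⟨er, haer, her⟩ := hlr a
    refine ⟨u ∩ ed.source ∩ er.source,
      ⟨(hu.inter ed.open_source).inter er.open_source, ?_, ?_⟩,
      ⟨⟨hau, haed⟩, haer⟩, fun y hy => hy.1.1⟩
    · exact (hed ▸ ed.injOn).mono fun y hy => hy.1.2
    · exact (her ▸ er.injOn).mono fun y hy => hy.2
  · intro hB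
    have h : ∀ x : C, ∃ A : Set C, IsOpen A ∧ x ∈ A ∧ K.IsLocalBisection A := by
      intro x
      obtain ⟨A, hA, hxA, -⟩ := hB.exists_subset_of_mem_open (Set.mem_univ x) isOpen_univ
      exact ⟨A, hA.1, hxA, hA.2⟩
    exact ⟨aux_localHomeo hd hdo fun x => (h x).imp fun A hA => ⟨hA.1, hA.2.1, hA.2.2.1⟩,
      aux_localHomeo hr hro fun x => (h x).imp fun A hA => ⟨hA.1, hA.2.1, hA.2.2.2⟩⟩
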